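/- If a group G is subgroup separable (LERF), then the direct product G × ℤ is subgroup separable. -/

import Mathlib

open Subgroup

section Aux

lemma prod_snd_zpow {A B : Type*} [Group A] [Group B] (p : A × B) (k : ℤ) :
    (p ^ k).2 = p.2 ^ k := rfl

lemma prod_fst_zpow {A B : Type*} [Group A] [Group B] (p : A × B) (k : ℤ) :
    (p ^ k).1 = p.1 ^ k := rfl

lemma mem_toSubgroup {A : Type*} [AddGroup A] (S : AddSubgroup A) (x : Multiplicative A) :
    x ∈ AddSubgroup.toSubgroup S ↔ Multiplicative.toAdd x ∈ S := Iff.rfl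

lemma fi_zpowers {M : ℤ} (hM : M ≠ 0) :
    (Subgroup.zpowers (Multiplicative.ofAdd M)).FiniteIndex := by
  have h : Subgroup.zpowers (Multiplicative.ofAdd M)
      = AddSubgroup.toSubgroup (AddSubgroup.zmultiples M) := by
    ext x
    rw [mem_toSubgroup, Subgroup.mem_zpowers_iff, AddSubgroup.mem_zmultiples_iff]
    constructor
    · rintro ⟨k, hk⟩
      exact ⟨k, by rw [← hk]; simp [toAdd_zpow]⟩
    · rintro ⟨k, hk⟩
      refine ⟨k, ?_⟩
      have : x = Multiplicative.ofAdd (Multiplicative.toAdd x) := rfl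
      rw [this, ← hk]
      exact (ofAdd_zsmul _ _).symm
  refine ⟨?_⟩
  rw [h, AddSubgroup.index_toSubgroup, Int.index_zmultiples]
  simpa using hM

variable {G : Type*} [Group G]

lemma conj_zpow_mem (N : Subgroup G) (t : G)
    (h1 : ∀ a ∈ N, t * a * t⁻¹ ∈ N) (h2 : ∀ a ∈ N, t⁻¹ * a * t ∈ N) :
    ∀ (j : ℤ), ∀ a ∈ N, t ^ j * a * t ^ (-j) ∈ N := by
  intro j
  induction j using Int.induction_on with
  | zero => simpa using fun a ha => ha
  | succ n ih =>
    intro a ha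
    have h := h1 _ (ih a ha)
    convert h using 1
    group
  | pred n ih =>
    intro a ha
    have h := h2 _ (ih a ha)
    convert h using 1
    group

lemma conj_closure_le {S : Set G} {t : G} (h : ∀ x ∈ S, t * x * t⁻¹ ∈ Subgroup.closure S) :
    ∀ a ∈ Subgroup.closure S, t * a * t⁻¹ ∈ Subgroup.closure S := by
  intro a ha
  have hmap : (Subgroup.closure S).map (MulAut.conj t).toMonoidHom ≤ Subgroup.closure S := by
    rw [MonoidHom.map_closure]
    refine (Subgroup.closure_le _).mpr ?_
    rintro y ⟨x, hx, rfl⟩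
    exact h x hx
  exact hmap ⟨a, ha, rfl⟩

/-- The subgroup of `G × Multiplicative ℤ` built from a `t`-conjugation-invariant
subgroup `N` of `G` and the element `(t, m)`. -/
def Gamma (t : G) (m : ℤ) (N : Subgroup G)
    (h1 : ∀ a ∈ N, t * a * t⁻¹ ∈ N) (h2 : ∀ a ∈ N, t⁻¹ * a * t ∈ N) :
    Subgroup (G × Multiplicative ℤ) where
  carrier := {y | ∃ k : ℤ, Multiplicative.toAdd y.2 = k * m ∧ y.1 * t ^ (-k) ∈ N}
  one_mem' := ⟨0, by simp, by simpa using N.one_mem⟩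
  mul_mem' := by
    rintro ⟨x, u⟩ ⟨y, v⟩ ⟨k, hk, hx⟩ ⟨l, hl, hy⟩
    refine ⟨k + l, by simp only [toAdd_mul, Prod.snd_mul] at *; rw [hk, hl]; ring, ?_⟩
    show x * y * t ^ (-(k + l)) ∈ N
    have h := N.mul_mem hx (conj_zpow_mem N t h1 h2 k _ hy)
    simp only at h
    convert h using 1
    group
  inv_mem' := by
    rintro ⟨x, u⟩ ⟨k, hk, hx⟩
    refine ⟨-k, by simp only [Prod.snd_inv, toAdd_inv]; rw [hk]; ring, ?_⟩
    show x⁻¹ * t ^ (-(-k)) ∈ N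
    have h := conj_zpow_mem N t h1 h2 (-k) _ (N.inv_mem hx)
    simp only at h
    convert h using 1
    group

lemma gamma_fi (t : G) (m : ℤ) (N : Subgroup G) (h1 h2) (hm : m ≠ 0) (hN : N.FiniteIndex) :
    (Gamma t m N h1 h2).FiniteIndex := by
  haveI := hN
  set Nc := N.normalCore with hNcdef
  haveI : Finite (G ⧸ Nc) := Subgroup.finite_quotient_of_finiteIndex (H := Nc)
  set d := Nat.card (G ⧸ Nc) with hddef
  have hd : 0 < d := Nat.card_pos
  have htd : t ^ d ∈ Nc := by
    have h : ((t : G) : G ⧸ Nc) ^ d = 1 := pow_card_eq_one'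
    rwa [← QuotientGroup.mk_pow, QuotientGroup.eq_one_iff] at h
  have hle : (Nc.prod (Subgroup.zpowers (Multiplicative.ofAdd (m * d)))) ≤ Gamma t m N h1 h2 := by
    rintro ⟨x, u⟩ ⟨hx, hu⟩
    obtain ⟨c, hc⟩ := Subgroup.mem_zpowers_iff.mp hu
    refine ⟨d * c, ?_, ?_⟩
    · rw [← hc]; rw [toAdd_zpow]; simp; ring
    · have ht' : t ^ ((d : ℤ) * c) ∈ Nc := by
        rw [zpow_mul, zpow_natCast]
        exact Subgroup.zpow_mem Nc htd c
      have := Nc.mul_mem hx (Nc.inv_mem ht')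
      apply N.normalCore_le
      convert this using 2
      group
  haveI : (Nc.prod (Subgroup.zpowers (Multiplicative.ofAdd (m * d)))).FiniteIndex := by
    refine ⟨?_⟩
    rw [Subgroup.index_prod]
    exact mul_ne_zero (Subgroup.FiniteIndex.index_ne_zero)
      (fi_zpowers (mul_ne_zero hm (Int.natCast_ne_zero.mpr hd.ne'))).index_ne_zero
  exact Subgroup.finiteIndex_of_le hle

/-- The finite generating set of the subgroup `B s`. -/
def BSet (T₀ : Finset G) (t : G) (s : ℕ) : Set G :=
  {x | ∃ a ∈ T₀, ∃ j : ℕ, j < s ∧ x = t ^ (j : ℤ) * a * t ^ (-(j : ℤ))} ∪ {t ^ (s : ℤ)}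

lemma BSet_finite (T₀ : Finset G) (t : G) (s : ℕ) : (BSet T₀ t s).Finite := by
  refine Set.Finite.union ?_ (Set.finite_singleton _)
  have h : {x | ∃ a ∈ T₀, ∃ j : ℕ, j < s ∧ x = t ^ (j : ℤ) * a * t ^ (-(j : ℤ))}
      ⊆ (fun p : G × ℕ => t ^ (p.2 : ℤ) * p.1 * t ^ (-(p.2 : ℤ))) ''
        ((T₀ : Set G) ×ˢ (Set.Iio s)) := by
    rintro x ⟨a, ha, j, hj, rfl⟩
    exact ⟨(a, j), ⟨ha, hj⟩, rfl⟩
  exact Set.Finite.subset ((T₀.finite_toSet.prod (Set.finite_Iio s)).image _) h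

lemma B_fg (T₀ : Finset G) (t : G) (s : ℕ) : (Subgroup.closure (BSet T₀ t s)).FG :=
  (Subgroup.fg_iff _).mpr ⟨BSet T₀ t s, rfl, BSet_finite T₀ t s⟩

lemma tpow_mem_B (T₀ : Finset G) (t : G) (s : ℕ) :
    t ^ (s : ℤ) ∈ Subgroup.closure (BSet T₀ t s) :=
  Subgroup.subset_closure (Or.inr rfl)

lemma mem_B_of_mem (T₀ : Finset G) (t : G) {s : ℕ} (hs : 0 < s) {a : G} (ha : a ∈ T₀) :
    a ∈ Subgroup.closure (BSet T₀ t s) := by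
  refine Subgroup.subset_closure (Or.inl ⟨a, ha, 0, hs, ?_⟩)
  simp

lemma B_conj1 (T₀ : Finset G) (t : G) {s : ℕ} (hs : 0 < s) :
    ∀ x ∈ Subgroup.closure (BSet T₀ t s), t * x * t⁻¹ ∈ Subgroup.closure (BSet T₀ t s) := by
  apply conj_closure_le
  rintro x (⟨a, ha, j, hj, rfl⟩ | rfl)
  · rcases Nat.lt_or_ge (j + 1) s with hj1 | hj1
    · refine Subgroup.subset_closure (Or.inl ⟨a, ha, j + 1, hj1, ?_⟩)
      push_cast
      group
    · have hjs : j + 1 = s := le_antisymm hj hj1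
      have h1 : t * (t ^ (j : ℤ) * a * t ^ (-(j : ℤ))) * t⁻¹
          = t ^ (s : ℤ) * a * (t ^ (s : ℤ))⁻¹ := by
        rw [← hjs]
        push_cast
        group
      rw [h1]
      exact Subgroup.mul_mem _ (Subgroup.mul_mem _ (tpow_mem_B T₀ t s)
        (mem_B_of_mem T₀ t hs ha)) (Subgroup.inv_mem _ (tpow_mem_B T₀ t s))
  · have h1 : t * t ^ (s : ℤ) * t⁻¹ = t ^ (s : ℤ) := by group
    rw [h1]
    exact tpow_mem_B T₀ t s

lemma B_conj2 (T₀ : Finset G) (t : G) {s : ℕ} (hs : 0 < s) :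
    ∀ x ∈ Subgroup.closure (BSet T₀ t s), t⁻¹ * x * t ∈ Subgroup.closure (BSet T₀ t s) := by
  have h := conj_closure_le (S := BSet T₀ t s) (t := t⁻¹) ?_
  · simpa using h
  rintro x (⟨a, ha, j, hj, rfl⟩ | rfl)
  · rcases Nat.eq_zero_or_pos j with rfl | hj0
    · have h1 : t⁻¹ * (t ^ ((0 : ℕ) : ℤ) * a * t ^ (-((0 : ℕ) : ℤ))) * t⁻¹⁻¹
          = (t ^ (s : ℤ))⁻¹ * (t ^ ((s - 1 : ℕ) : ℤ) * a * t ^ (-((s - 1 : ℕ) : ℤ))) * t ^ (s : ℤ) := by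
        have hcast : ((s - 1 : ℕ) : ℤ) = (s : ℤ) - 1 := by omega
        rw [hcast]
        push_cast
        group
      rw [h1]
      refine Subgroup.mul_mem _ (Subgroup.mul_mem _ (Subgroup.inv_mem _ (tpow_mem_B T₀ t s))
        (Subgroup.subset_closure (Or.inl ⟨a, ha, s - 1, by omega, rfl⟩))) (tpow_mem_B T₀ t s)
    · refine Subgroup.subset_closure (Or.inl ⟨a, ha, j - 1, by omega, ?_⟩)
      have hcast : ((j - 1 : ℕ) : ℤ) = (j : ℤ) - 1 := by omega
      rw [hcast]
      group
  · have h1 : t⁻¹ * t ^ (s : ℤ) * t⁻¹⁻¹ = t ^ (s : ℤ) := by group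
    rw [h1]
    exact tpow_mem_B T₀ t s

/-- Intersection of all conjugates of `K₀` by powers of `t`. -/
def Kinf (K₀ : Subgroup G) (t : G) : Subgroup G where
  carrier := {x | ∀ j : ℤ, t ^ j * x * t ^ (-j) ∈ K₀}
  one_mem' := by
    intro j
    have h : t ^ j * 1 * t ^ (-j) = 1 := by group
    rw [h]; exact K₀.one_mem
  mul_mem' := by
    intro x y hx hy j
    have h := K₀.mul_mem (hx j) (hy j)
    convert h using 1
    group
  inv_mem' := by
    intro x hx j
    have h := K₀.inv_mem (hx j)
    convert h using 1
    group

lemma Kinf_le {K₀ : Subgroup G} {t : G} : Kinf K₀ t ≤ K₀ := by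
  intro x hx
  have h := hx 0
  simpa using h

lemma Kinf_conj1 {K₀ : Subgroup G} {t : G} : ∀ x ∈ Kinf K₀ t, t * x * t⁻¹ ∈ Kinf K₀ t := by
  intro x hx j
  have h := hx (j + 1)
  convert h using 1
  group

lemma Kinf_conj2 {K₀ : Subgroup G} {t : G} : ∀ x ∈ Kinf K₀ t, t⁻¹ * x * t ∈ Kinf K₀ t := by
  intro x hx j
  have h := hx (j - 1)
  convert h using 1
  group

lemma le_Kinf {K₀ N : Subgroup G} {t : G} (hNK : N ≤ K₀)
    (h1 : ∀ x ∈ N, t * x * t⁻¹ ∈ N) (h2 : ∀ x ∈ N, t⁻¹ * x * t ∈ N) :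
    N ≤ Kinf K₀ t := by
  intro x hx j
  exact hNK (conj_zpow_mem N t h1 h2 j x hx)

lemma Kinf_fi {K₀ : Subgroup G} {t : G} {s : ℕ} (hs : 0 < s) (hts : t ^ (s : ℤ) ∈ K₀)
    (hfi : K₀.FiniteIndex) : (Kinf K₀ t).FiniteIndex := by
  have hlow : (⨅ j : Fin s, K₀.comap (MulAut.conj (t ^ ((j : ℕ) : ℤ))).toMonoidHom)
      ≤ Kinf K₀ t := by
    intro x hx
    rw [Subgroup.mem_iInf] at hx
    intro j
    have hr0 : 0 ≤ j % (s : ℤ) := Int.emod_nonneg j (by exact_mod_cast hs.ne')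
    have hrs : j % (s : ℤ) < s := Int.emod_lt_of_pos j (by exact_mod_cast hs)
    set r : ℕ := (j % (s : ℤ)).toNat with hrdef
    have hrcast : (r : ℤ) = j % (s : ℤ) := Int.toNat_of_nonneg hr0
    have hrlt : r < s := by omega
    have hmem := hx ⟨r, hrlt⟩
    rw [Subgroup.mem_comap] at hmem
    have hmem' : t ^ (r : ℤ) * x * (t ^ (r : ℤ))⁻¹ ∈ K₀ := hmem
    obtain ⟨q, hq⟩ : ∃ q : ℤ, j = (s : ℤ) * q + r := by
      refine ⟨j / (s : ℤ), ?_⟩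
      rw [hrcast]
      exact (Int.mul_ediv_add_emod j s).symm
    have heq : t ^ j * x * t ^ (-j)
        = (t ^ (s : ℤ)) ^ q * (t ^ (r : ℤ) * x * (t ^ (r : ℤ))⁻¹)
          * ((t ^ (s : ℤ)) ^ q)⁻¹ := by
      rw [hq]
      group
    rw [heq]
    exact K₀.mul_mem (K₀.mul_mem (K₀.zpow_mem hts _) hmem') (K₀.inv_mem (K₀.zpow_mem hts _))
  have hall : ∀ j : Fin s, (K₀.comap (MulAut.conj (t ^ ((j : ℕ) : ℤ))).toMonoidHom).FiniteIndex := by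
    intro j
    have hsurj : Function.Surjective ((MulAut.conj (t ^ ((j : ℕ) : ℤ))).toMonoidHom) :=
      (MulAut.conj (t ^ ((j : ℕ) : ℤ))).surjective
    have h := Subgroup.index_comap_of_surjective (H := K₀) hsurj
    exact ⟨h ▸ hfi.index_ne_zero⟩
  haveI : (⨅ j : Fin s, K₀.comap (MulAut.conj (t ^ ((j : ℕ) : ℤ))).toMonoidHom).FiniteIndex :=
    Subgroup.finiteIndex_iInf hall
  exact Subgroup.finiteIndex_of_le hlow

lemma exists_s (T₀ : Finset G) (t g : G)
    (hg : g ∉ Subgroup.closure {x | ∃ a ∈ T₀, ∃ j : ℤ, x = t ^ j * a * t ^ (-j)}) :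
    ∃ s : ℕ, 0 < s ∧ g ∉ Subgroup.closure (BSet T₀ t s) := by
  set C : Set G := {x | ∃ a ∈ T₀, ∃ j : ℤ, x = t ^ j * a * t ^ (-j)} with hC
  set N := Subgroup.closure C with hNdef
  set L := Subgroup.closure ((T₀ : Set G) ∪ {t}) with hLdef
  have ht : t ∈ L := Subgroup.subset_closure (Or.inr rfl)
  have hT₀L : ∀ a ∈ T₀, a ∈ L := fun a ha => Subgroup.subset_closure (Or.inl ha)
  have hT₀N : ∀ a ∈ T₀, a ∈ N := by
    intro a ha
    refine Subgroup.subset_closure ⟨a, ha, 0, by simp⟩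
  have hNL : N ≤ L := by
    rw [hNdef, Subgroup.closure_le]
    rintro x ⟨a, ha, j, rfl⟩
    exact mul_mem (mul_mem (zpow_mem ht j) (hT₀L a ha)) (zpow_mem ht (-j))
  have hN1 : ∀ x ∈ N, t * x * t⁻¹ ∈ N := by
    apply conj_closure_le
    rintro x ⟨a, ha, j, rfl⟩
    refine Subgroup.subset_closure ⟨a, ha, j + 1, ?_⟩
    group
  have hN2 : ∀ x ∈ N, t⁻¹ * x * t ∈ N := by
    have h := conj_closure_le (S := C) (t := t⁻¹) ?_
    · simpa using h
    rintro x ⟨a, ha, j, rfl⟩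
    refine Subgroup.subset_closure ⟨a, ha, j - 1, ?_⟩
    group
  have hBL : ∀ s : ℕ, Subgroup.closure (BSet T₀ t s) ≤ L := by
    intro s
    rw [Subgroup.closure_le]
    rintro x (⟨a, ha, j, hj, rfl⟩ | rfl)
    · exact mul_mem (mul_mem (zpow_mem ht _) (hT₀L a ha)) (zpow_mem ht _)
    · exact zpow_mem ht _
  by_cases hgL : g ∈ L
  swap
  · exact ⟨1, one_pos, fun h => hgL (hBL 1 h)⟩
  have hLnorm : L ≤ Subgroup.normalizer (N : Set G) := by
    rw [hLdef, Subgroup.closure_le]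
    rintro x (hx | hx)
    · exact Subgroup.le_normalizer (hT₀N x hx)
    · have hx' : x = t := hx
      rw [hx', SetLike.mem_coe, Subgroup.mem_normalizer_iff]
      intro h
      constructor
      · exact fun hh => hN1 h hh
      · intro hh
        have h2 := hN2 _ hh
        have heq : t⁻¹ * (t * h * t⁻¹) * t = h := by group
        rwa [heq] at h2
  haveI hnormal : (N.subgroupOf L).Normal := by
    constructor
    intro n hn g'
    rw [Subgroup.mem_subgroupOf] at hn ⊢
    have h := (Subgroup.mem_normalizer_iff.mp (hLnorm g'.2) (↑n)).mp hn
    simpa using h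
  set φ := QuotientGroup.mk' (N.subgroupOf L) with hφdef
  set τ := φ ⟨t, ht⟩ with hτdef
  have hφone : ∀ (a : G) (ha : a ∈ L), a ∈ N → φ ⟨a, ha⟩ = 1 := by
    intro a ha haN
    refine (QuotientGroup.eq_one_iff (⟨a, ha⟩ : L)).mpr ?_
    rw [Subgroup.mem_subgroupOf]
    exact haN
  have hg1 : φ ⟨g, hgL⟩ ≠ 1 := by
    intro h
    have h2 := (QuotientGroup.eq_one_iff (⟨g, hgL⟩ : L)).mp h
    rw [Subgroup.mem_subgroupOf] at h2
    exact hg h2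
  have hsub : ∀ (j : ℤ) (a : G) (ha : a ∈ L) (h : t ^ j * a * t ^ (-j) ∈ L),
      φ ⟨t ^ j * a * t ^ (-j), h⟩ = τ ^ j * φ ⟨a, ha⟩ * τ ^ (-j) := by
    intro j a ha h
    have heq : (⟨t ^ j * a * t ^ (-j), h⟩ : L) = ⟨t, ht⟩ ^ j * ⟨a, ha⟩ * ⟨t, ht⟩ ^ (-j) := by
      apply Subtype.ext
      simp
    rw [heq, map_mul, map_mul, map_zpow, map_zpow]
  have hsubs : ∀ (s : ℕ) (h : t ^ (s : ℤ) ∈ L), φ ⟨t ^ (s : ℤ), h⟩ = τ ^ (s : ℤ) := by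
    intro s h
    have heq : (⟨t ^ (s : ℤ), h⟩ : L) = ⟨t, ht⟩ ^ (s : ℤ) := by
      apply Subtype.ext
      simp
    rw [heq, map_zpow]
  have hzp : ∀ (y : G) (hy : y ∈ L), φ ⟨y, hy⟩ ∈ Subgroup.zpowers τ := by
    have main : ∀ y ∈ Subgroup.closure ((T₀ : Set G) ∪ {t}),
        ∀ (hyL : y ∈ L), φ ⟨y, hyL⟩ ∈ Subgroup.zpowers τ := by
      intro y hy
      induction hy using Subgroup.closure_induction with
      | mem z hz =>
        intro hyL
        rcases hz with hz | hz
        · have h1 : φ ⟨z, hyL⟩ = 1 := hφone z hyL (hT₀N z hz)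
          rw [h1]
          exact one_mem _
        · rcases hz with rfl
          exact Subgroup.mem_zpowers τ
      | one =>
        intro hyL
        show φ 1 ∈ _
        rw [map_one]
        exact one_mem _
      | mul z w hz hw pz pw =>
        intro hyL
        show φ (⟨z, hz⟩ * ⟨w, hw⟩) ∈ _
        rw [map_mul]
        exact mul_mem (pz hz) (pw hw)
      | inv z hz pz =>
        intro hyL
        show φ (⟨z, hz⟩⁻¹) ∈ _
        rw [map_inv]
        exact inv_mem (pz hz)
    exact fun y hy => main y hy hy
  have himg : ∀ (s : ℕ), g ∈ Subgroup.closure (BSet T₀ t s) →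
      φ ⟨g, hgL⟩ ∈ Subgroup.zpowers (τ ^ (s : ℤ)) := by
    intro s hgB
    have hle : Subgroup.closure (BSet T₀ t s)
        ≤ Subgroup.map L.subtype ((Subgroup.zpowers (τ ^ (s : ℤ))).comap φ) := by
      rw [Subgroup.closure_le]
      rintro x (⟨a, ha, j, hj, rfl⟩ | rfl)
      · have hxL : t ^ (j : ℤ) * a * t ^ (-(j : ℤ)) ∈ L :=
          mul_mem (mul_mem (zpow_mem ht _) (hT₀L a ha)) (zpow_mem ht _)
        refine ⟨⟨_, hxL⟩, ?_, rfl⟩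
        rw [SetLike.mem_coe, Subgroup.mem_comap, hsub (j : ℤ) a (hT₀L a ha) hxL,
          hφone a (hT₀L a ha) (hT₀N a ha)]
        have h1 : τ ^ (j : ℤ) * 1 * τ ^ (-(j : ℤ)) = 1 := by group
        rw [h1]
        exact one_mem _
      · have hxL : t ^ (s : ℤ) ∈ L := zpow_mem ht _
        refine ⟨⟨_, hxL⟩, ?_, rfl⟩
        rw [SetLike.mem_coe, Subgroup.mem_comap, hsubs s hxL]
        exact Subgroup.mem_zpowers _
    obtain ⟨y, hy, hyg⟩ := hle hgB
    rw [SetLike.mem_coe, Subgroup.mem_comap] at hy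
    have hyey : y = ⟨g, hgL⟩ := Subtype.ext hyg
    rwa [hyey] at hy
  by_cases hfin : ∃ r : ℕ, 0 < r ∧ τ ^ (r : ℤ) = 1
  · obtain ⟨r, hr, hτr⟩ := hfin
    refine ⟨r, hr, fun hgB => ?_⟩
    have h := himg r hgB
    rw [hτr, Subgroup.zpowers_one_eq_bot] at h
    exact hg1 (Subgroup.mem_bot.mp h)
  · push_neg at hfin
    obtain ⟨e, he⟩ := Subgroup.mem_zpowers_iff.mp (hzp g hgL)
    have he0 : e ≠ 0 := by
      rintro rfl
      rw [zpow_zero] at he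
      exact hg1 he.symm
    refine ⟨e.natAbs + 1, Nat.succ_pos _, fun hgB => ?_⟩
    obtain ⟨c, hc⟩ := Subgroup.mem_zpowers_iff.mp (himg _ hgB)
    rw [← he, ← zpow_mul] at hc
    have hz : (((e.natAbs + 1 : ℕ) : ℤ) * c - e) = 0 := by
      by_contra hne
      have hτz : τ ^ (((e.natAbs + 1 : ℕ) : ℤ) * c - e) = 1 := by
        rw [zpow_sub, hc, he]
        simp
      have hpos : 0 < (((e.natAbs + 1 : ℕ) : ℤ) * c - e).natAbs := Int.natAbs_pos.mpr hne
      apply hfin _ hpos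
      set z : ℤ := ((e.natAbs + 1 : ℕ) : ℤ) * c - e with hzd
      rcases (by omega : ((z.natAbs : ℤ) = z ∨ (z.natAbs : ℤ) = -z)) with hh | hh
      · rw [hh, hτz]
      · rw [hh, zpow_neg, hτz, inv_one]
    have hdvd : ((e.natAbs + 1 : ℕ) : ℤ) ∣ e := ⟨c, by linarith⟩
    have hdvd2 : e.natAbs + 1 ∣ e.natAbs := by
      have h2 := Int.natAbs_dvd_natAbs.mpr hdvd
      rwa [Int.natAbs_natCast] at h2
    have hle2 := Nat.le_of_dvd (Nat.pos_of_ne_zero (Int.natAbs_ne_zero.mpr he0)) hdvd2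
    omega

lemma lerf_of_sep
    (h : ∀ H : Subgroup G, H.FG → ∀ x ∉ H, ∃ K : Subgroup G, H ≤ K ∧ K.FiniteIndex ∧ x ∉ K) :
    ∀ H : Subgroup G, H.FG → H = sInf {K : Subgroup G | H ≤ K ∧ K.FiniteIndex} := by
  intro H hFG
  refine le_antisymm (le_sInf fun K hK => hK.1) ?_
  intro x hx
  by_contra hxH
  obtain ⟨K, hHK, hKfi, hxK⟩ := h H hFG x hxH
  exact hxK (Subgroup.mem_sInf.mp hx K ⟨hHK, hKfi⟩)

lemma sep_of_lerf (hG : ∀ H : Subgroup G, H.FG → H = sInf {K : Subgroup G | H ≤ K ∧ K.FiniteIndex}) :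
    ∀ B : Subgroup G, B.FG → ∀ g ∉ B, ∃ K, B ≤ K ∧ K.FiniteIndex ∧ g ∉ K := by
  intro B hB g hg
  by_contra hcon
  push_neg at hcon
  apply hg
  rw [hG B hB, Subgroup.mem_sInf]
  rintro K ⟨h1, h2⟩
  rcases hcon K h1 h2 with hK
  exact hK

end Aux

/-- A group `G` is subgroup separable (LERF) if every finitely generated subgroup
is the intersection of the finite-index subgroups containing it. -/
def IsLERF (G : Type*) [Group G] : Prop :=
  ∀ H : Subgroup G, H.FG → H = sInf {K : Subgroup G | H ≤ K ∧ K.FiniteIndex}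

theorem lerf_prod_int {G : Type*} [Group G] (hG : IsLERF G) :
    IsLERF (G × Multiplicative ℤ) := by
  have hsep := sep_of_lerf hG
  apply lerf_of_sep
  intro H hFG x hx
  classical
  obtain ⟨T, hT⟩ := hFG
  obtain ⟨m, hm⟩ := Int.subgroup_cyclic
    (AddSubgroup.toSubgroup.symm (H.map (MonoidHom.snd G (Multiplicative ℤ))))
  have hP : ∀ u : Multiplicative ℤ, u ∈ H.map (MonoidHom.snd G (Multiplicative ℤ)) ↔
      ∃ k : ℤ, Multiplicative.toAdd u = k * m := by
    intro u
    have hmem : u ∈ H.map (MonoidHom.snd G (Multiplicative ℤ)) ↔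
        Multiplicative.toAdd u ∈
          AddSubgroup.toSubgroup.symm (H.map (MonoidHom.snd G (Multiplicative ℤ))) := Iff.rfl
    rw [hmem, hm, ← AddSubgroup.zmultiples_eq_closure, AddSubgroup.mem_zmultiples_iff]
    constructor
    · rintro ⟨k, hk⟩
      exact ⟨k, by rw [← hk, zsmul_eq_mul, Int.cast_id]⟩
    · rintro ⟨k, hk⟩
      exact ⟨k, by rw [zsmul_eq_mul, Int.cast_id, hk]⟩
  obtain ⟨y, hyH, hy2⟩ : ∃ y ∈ H, (MonoidHom.snd G (Multiplicative ℤ)) y = Multiplicative.ofAdd m := by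
    have : Multiplicative.ofAdd m ∈ H.map (MonoidHom.snd G (Multiplicative ℤ)) :=
      (hP _).mpr ⟨1, by simp⟩
    exact this
  set t : G := y.1 with htdef
  have htH : (t, Multiplicative.ofAdd m) ∈ H := by
    have hy : y = (t, Multiplicative.ofAdd m) := by
      apply Prod.ext
      · rfl
      · exact hy2
    rwa [← hy]
  by_cases hm0 : m = 0
  · -- degenerate case : H ≤ G × {1}
    subst hm0
    have hsnd : ∀ y ∈ H, y.2 = (1 : Multiplicative ℤ) := by
      intro z hz
      obtain ⟨k, hk⟩ := (hP z.2).mp ⟨z, hz, rfl⟩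
      simp only [mul_zero] at hk
      have : Multiplicative.toAdd z.2 = Multiplicative.toAdd (1 : Multiplicative ℤ) := by simpa using hk
      exact Multiplicative.toAdd.injective this
    by_cases hx2 : x.2 = 1
    · have hx1 : x.1 ∉ H.map (MonoidHom.fst G (Multiplicative ℤ)) := by
        rintro ⟨z, hz, hz1⟩
        apply hx
        have : z = x := by
          apply Prod.ext
          · exact hz1
          · rw [hsnd z hz, hx2]
        rwa [← this]
      have hAfg : (H.map (MonoidHom.fst G (Multiplicative ℤ))).FG := by
        refine ⟨T.image (MonoidHom.fst G (Multiplicative ℤ)), ?_⟩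
        rw [Finset.coe_image, ← MonoidHom.map_closure, hT]
      obtain ⟨K₀, hAK₀, hK₀fi, hxK₀⟩ := hsep _ hAfg x.1 hx1
      refine ⟨K₀.prod ⊤, ?_, ⟨?_⟩, ?_⟩
      · intro z hz
        exact Subgroup.mem_prod.mpr ⟨hAK₀ ⟨z, hz, rfl⟩, trivial⟩
      · rw [Subgroup.index_prod, Subgroup.index_top, mul_one]
        exact hK₀fi.index_ne_zero
      · intro hxK
        exact hxK₀ (Subgroup.mem_prod.mp hxK).1
    · -- x.2 ≠ 1
      have hn0 : Multiplicative.toAdd x.2 ≠ 0 := by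
        intro h
        exact hx2 (Multiplicative.toAdd.injective (by simpa using h))
      refine ⟨(⊤ : Subgroup G).prod
        (Subgroup.zpowers (Multiplicative.ofAdd (2 * Multiplicative.toAdd x.2))), ?_, ⟨?_⟩, ?_⟩
      · intro z hz
        refine Subgroup.mem_prod.mpr ⟨trivial, ?_⟩
        rw [hsnd z hz]
        exact one_mem _
      · rw [Subgroup.index_prod, Subgroup.index_top, one_mul]
        exact (fi_zpowers (mul_ne_zero two_ne_zero hn0)).index_ne_zero
      · intro hxK
        obtain ⟨k, hk⟩ := Subgroup.mem_zpowers_iff.mp (Subgroup.mem_prod.mp hxK).2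
        have h5 := congrArg Multiplicative.toAdd hk
        rw [toAdd_zpow, toAdd_ofAdd, zsmul_eq_mul, Int.cast_id] at h5
        have h3 : (2 * k - 1) * Multiplicative.toAdd x.2 = 0 := by linear_combination h5
        rcases mul_eq_zero.mp h3 with h4 | h4
        · omega
        · exact hn0 h4
  · -- m ≠ 0
    by_cases hdvd : m ∣ Multiplicative.toAdd x.2
    swap
    · refine ⟨(⊤ : Subgroup G).prod (Subgroup.zpowers (Multiplicative.ofAdd m)), ?_, ⟨?_⟩, ?_⟩
      · intro z hz
        refine Subgroup.mem_prod.mpr ⟨trivial, ?_⟩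
        obtain ⟨k, hk⟩ := (hP z.2).mp ⟨z, hz, rfl⟩
        refine Subgroup.mem_zpowers_iff.mpr ⟨k, ?_⟩
        apply Multiplicative.toAdd.injective
        rw [toAdd_zpow, toAdd_ofAdd, zsmul_eq_mul, Int.cast_id, hk]
      · rw [Subgroup.index_prod, Subgroup.index_top, one_mul]
        exact (fi_zpowers hm0).index_ne_zero
      · intro hxK
        obtain ⟨k, hk⟩ := Subgroup.mem_zpowers_iff.mp (Subgroup.mem_prod.mp hxK).2
        apply hdvd
        refine ⟨k, ?_⟩
        have h5 := congrArg Multiplicative.toAdd hk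
        rw [toAdd_zpow, toAdd_ofAdd, zsmul_eq_mul, Int.cast_id] at h5
        rw [← h5]
        ring
    · obtain ⟨k, hk⟩ := hdvd
      set tm : G × Multiplicative ℤ := (t, Multiplicative.ofAdd m) with htmdef
      set x' := x * (tm ^ k)⁻¹ with hx'def
      have hx'2 : x'.2 = 1 := by
        apply Multiplicative.toAdd.injective
        rw [hx'def]
        simp only [Prod.snd_mul, Prod.snd_inv, prod_snd_zpow, toAdd_mul, toAdd_inv, toAdd_zpow,
          toAdd_ofAdd, zsmul_eq_mul, Int.cast_id, toAdd_one, htmdef]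
        linear_combination hk
      set g : G := x'.1 with hgdef
      have hx'H : x' ∉ H := by
        intro h
        apply hx
        have hxe : x = x' * tm ^ k := by
          rw [hx'def]
          group
        rw [hxe]
        exact H.mul_mem h (H.zpow_mem htH k)
      set f : G × Multiplicative ℤ → G :=
        fun z => z.1 * t ^ (-(Multiplicative.toAdd z.2 / m)) with hfdef
      set T₀ : Finset G := T.image f with hT₀def
      have hTP : ∀ z ∈ T, z ∈ H := fun z hz => hT ▸ Subgroup.subset_closure hz
      have haH : ∀ a ∈ T₀, (a, (1 : Multiplicative ℤ)) ∈ H := by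
        intro a ha
        obtain ⟨z, hzT, rfl⟩ := Finset.mem_image.mp ha
        have hzH := hTP z hzT
        obtain ⟨kk, hkk⟩ := (hP z.2).mp ⟨z, hzH, rfl⟩
        have hdiv : Multiplicative.toAdd z.2 / m = kk := by
          rw [hkk]
          exact Int.mul_ediv_cancel _ hm0
        have heq : (f z, (1 : Multiplicative ℤ)) = z * (tm ^ kk)⁻¹ := by
          apply Prod.ext
          · rw [hfdef]
            simp only
            rw [hdiv]
            simp [htmdef]
          · apply Multiplicative.toAdd.injective
            simp [toAdd_zpow, htmdef]
            omega
        rw [heq]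
        exact H.mul_mem hzH (H.inv_mem (H.zpow_mem htH kk))
      have hHgen : H = Subgroup.closure
          ((fun a => (a, (1 : Multiplicative ℤ))) '' (T₀ : Set G) ∪ {tm}) := by
        apply le_antisymm
        · rw [← hT, Subgroup.closure_le]
          intro z hzT
          have hzH := hTP z hzT
          obtain ⟨kk, hkk⟩ := (hP z.2).mp ⟨z, hzH, rfl⟩
          have hdiv : Multiplicative.toAdd z.2 / m = kk := by
            rw [hkk]
            exact Int.mul_ediv_cancel _ hm0
          have heq : z = (f z, (1 : Multiplicative ℤ)) * tm ^ kk := by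
            apply Prod.ext
            · rw [hfdef]
              simp only
              rw [hdiv]
              simp [htmdef]
            · apply Multiplicative.toAdd.injective
              simp [toAdd_zpow, htmdef]
              omega
          rw [SetLike.mem_coe, heq]
          refine Subgroup.mul_mem _ ?_ (Subgroup.zpow_mem _ ?_ kk)
          · exact Subgroup.subset_closure (Or.inl ⟨f z, Finset.mem_image_of_mem f hzT, rfl⟩)
          · exact Subgroup.subset_closure (Or.inr rfl)
        · rw [Subgroup.closure_le]
          rintro z (⟨a, ha, rfl⟩ | hz)
          · exact haH a ha
          · have hz' : z = tm := hz
            rw [hz']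
            exact htH
      have hgN : g ∉ Subgroup.closure {z | ∃ a ∈ T₀, ∃ j : ℤ, z = t ^ j * a * t ^ (-j)} := by
        intro hgN
        apply hx'H
        have hle : Subgroup.closure {z | ∃ a ∈ T₀, ∃ j : ℤ, z = t ^ j * a * t ^ (-j)}
            ≤ H.comap (MonoidHom.inl G (Multiplicative ℤ)) := by
          rw [Subgroup.closure_le]
          rintro z ⟨a, ha, j, rfl⟩
          rw [SetLike.mem_coe, Subgroup.mem_comap]
          have heq : (MonoidHom.inl G (Multiplicative ℤ)) (t ^ j * a * t ^ (-j))
              = tm ^ j * (a, (1 : Multiplicative ℤ)) * (tm ^ j)⁻¹ := by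
            apply Prod.ext
            · simp [htmdef]
            · apply Multiplicative.toAdd.injective
              simp [toAdd_zpow, htmdef]
          rw [heq]
          exact H.mul_mem (H.mul_mem (H.zpow_mem htH j) (haH a ha)) (H.inv_mem (H.zpow_mem htH j))
        have hgH := hle hgN
        rw [Subgroup.mem_comap] at hgH
        have hx'eq : x' = (g, (1 : Multiplicative ℤ)) := by
          apply Prod.ext
          · rfl
          · exact hx'2
        rw [hx'eq]
        exact hgH
      obtain ⟨s, hs, hgB⟩ := exists_s T₀ t g hgN
      obtain ⟨K₀, hBK₀, hK₀fi, hgK₀⟩ := hsep _ (B_fg T₀ t s) g hgB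
      have hts : t ^ (s : ℤ) ∈ K₀ := hBK₀ (tpow_mem_B T₀ t s)
      have hBK₁ : Subgroup.closure (BSet T₀ t s) ≤ Kinf K₀ t :=
        le_Kinf hBK₀ (B_conj1 T₀ t hs) (B_conj2 T₀ t hs)
      refine ⟨Gamma t m (Kinf K₀ t) Kinf_conj1 Kinf_conj2, ?_,
        gamma_fi t m (Kinf K₀ t) _ _ hm0 (Kinf_fi hs hts hK₀fi), ?_⟩
      · rw [hHgen, Subgroup.closure_le]
        rintro z (⟨a, ha, rfl⟩ | hz)
        · refine ⟨0, by simp, ?_⟩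
          simpa using hBK₁ (mem_B_of_mem T₀ t hs ha)
        · have hz' : z = tm := hz
          rw [hz']
          exact ⟨1, by simp [htmdef], by simpa [htmdef] using (Kinf K₀ t).one_mem⟩
      · intro hxK
        have htmK : tm ∈ Gamma t m (Kinf K₀ t) Kinf_conj1 Kinf_conj2 :=
          ⟨1, by simp [htmdef], by simpa [htmdef] using (Kinf K₀ t).one_mem⟩
        have hx'K : x' ∈ Gamma t m (Kinf K₀ t) Kinf_conj1 Kinf_conj2 :=
          Subgroup.mul_mem _ hxK (Subgroup.inv_mem _ (Subgroup.zpow_mem _ htmK k))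
        obtain ⟨k', hk', hgK⟩ := hx'K
        have hk'0 : k' = 0 := by
          rw [hx'2] at hk'
          have h5 : k' * m = 0 := by simpa using hk'.symm
          rcases mul_eq_zero.mp h5 with h4 | h4
          · exact h4
          · exact absurd h4 hm0
        rw [hk'0] at hgK
        simp only [neg_zero, zpow_zero, mul_one] at hgK
        exact hgK₀ (Kinf_le hgK)
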